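/- Let F : G₁ → G₂ be a functor between groupoids. Then F is fully faithful if and only if for every object γ₂ of G₂ the essential fiber of F over γ₂ is either empty or equivalent to the terminal category (the category with exactly one object and only the identity morphism). -/
import Mathlib


open CategoryTheory

/-- A functor `F : G₁ ⥤ G₂` between groupoids is fully faithful if and
only if for every object `γ₂` of `G₂` the essential fiber of `F` over `γ₂` (which, since
`G₂` is a groupoid, is the costructured arrow category over `γ₂`) is either empty or
equivalent to the terminal category. -/
theorem stmt17 {G₁ G₂ : Type*} [Groupoid G₁] [Groupoid G₂] (F : G₁ ⥤ G₂) :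
    (F.Full ∧ F.Faithful) ↔
      ∀ γ₂ : G₂, IsEmpty (CostructuredArrow F γ₂) ∨
        Nonempty (CostructuredArrow F γ₂ ≌ Discrete PUnit) := by
  constructor
  · rintro ⟨full, faithful⟩ γ₂
    by_cases h : Nonempty (CostructuredArrow F γ₂)
    · right
      rw [equiv_punit_iff_unique]
      refine ⟨h, fun a b => ⟨⟨⟨CostructuredArrow.homMk (F.preimage (a.hom ≫ inv b.hom))
        (by simp)⟩, ?_⟩⟩⟩
      intro f
      have hw : F.map f.left ≫ b.hom = a.hom := CostructuredArrow.w f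
      ext
      apply F.map_injective
      show F.map f.left = F.map (F.preimage (a.hom ≫ inv b.hom))
      rw [F.map_preimage, ← hw]
      simp
    · left; exact not_nonempty_iff.mp h
  · intro h
    have key : ∀ (γ₁ γ₁' : G₁) (g : F.obj γ₁ ⟶ F.obj γ₁'),
        Nonempty (Unique ((CostructuredArrow.mk g : CostructuredArrow F (F.obj γ₁')) ⟶
          CostructuredArrow.mk (𝟙 (F.obj γ₁')))) := by
      intro γ₁ γ₁' g
      obtain he | e := h (F.obj γ₁')
      · exact (he.false (CostructuredArrow.mk (𝟙 (F.obj γ₁')))).elim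
      · exact ((equiv_punit_iff_unique _).mp e).2 _ _
    constructor
    · constructor
      intro γ₁ γ₁' g
      obtain ⟨u⟩ := key γ₁ γ₁' g
      exact ⟨u.default.left, by simpa using CostructuredArrow.w u.default⟩
    · constructor
      intro γ₁ γ₁' u v huv
      obtain ⟨un⟩ := key γ₁ γ₁' (F.map u)
      have h1 : (CostructuredArrow.homMk u (by simp) :
          (CostructuredArrow.mk (F.map u) : CostructuredArrow F (F.obj γ₁')) ⟶
            CostructuredArrow.mk (𝟙 (F.obj γ₁'))) =
          CostructuredArrow.homMk v (by simp [huv]) := by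
        rw [un.uniq (CostructuredArrow.homMk u (by simp)),
          un.uniq (CostructuredArrow.homMk v (by simp [huv]))]
      simpa using congrArg CommaMorphism.left h1
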